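/- Let X = (X₁,…,X_d) be a random vector whose joint distribution function F is a MEV distribution with unit Fréchet marginals, and let I₁, I₂ be disjoint non-empty subsets of {1,…,d}. Then for all x, y > 0, y ε_{I₂} · Λ_U^{(I₁|I₂)}(x,y) = x ε_{I₁} · Λ_U^{(I₂|I₁)}(y,x) = x ε_{I₁} + y ε_{I₂} − l^{(I₁,I₂)}(x^{-1}, y^{-1}), where Λ_U^{(I₁|I₂)}(x,y) = lim_{t→∞} P( M(I₁) > 1 − x/t | M(I₂) > 1 − y/t ). -/

import Mathlib

open MeasureTheory Filter Finset Topology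
open scoped ENNReal
set_option linter.unusedSectionVars false
set_option linter.unusedVariables false

/-- The joint distribution function of the random vector `X` under `μ`. -/
noncomputable def jointCDF {Ω : Type*} [MeasurableSpace Ω] (μ : Measure Ω) {d : ℕ}
    (X : Fin d → Ω → ℝ) (x : Fin d → ℝ) : ℝ :=
  (μ {ω | ∀ i, X i ω ≤ x i}).toReal

/-- The marginal distribution function of the `i`-th coordinate of `X` under `μ`. -/
noncomputable def margCDF {Ω : Type*} [MeasurableSpace Ω] (μ : Measure Ω) {d : ℕ}
    (X : Fin d → Ω → ℝ) (i : Fin d) (u : ℝ) : ℝ :=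
  (μ {ω | X i ω ≤ u}).toReal

/-- `l^{(I₁,I₂)}(x,y) = -log F(a₁,…,a_d)` where `aᵢ = x` on `I₁`, `aᵢ = y` on `I₂` and
`aᵢ = ∞` otherwise (taking the limit of `F` in those arguments, i.e. dropping the
corresponding constraints). -/
noncomputable def mevL {Ω : Type*} [MeasurableSpace Ω] (μ : Measure Ω) {d : ℕ}
    (X : Fin d → Ω → ℝ) (I₁ I₂ : Finset (Fin d)) (x y : ℝ) : ℝ :=
  -Real.log (μ {ω | (∀ i ∈ I₁, X i ω ≤ x) ∧ (∀ j ∈ I₂, X j ω ≤ y)}).toReal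

/-- The extremal coefficient `ε_I = l^{(I,∅)}(1,1)` of the sub-vector `X_I`. -/
noncomputable def extCoef {Ω : Type*} [MeasurableSpace Ω] (μ : Measure Ω) {d : ℕ}
    (X : Fin d → Ω → ℝ) (I : Finset (Fin d)) : ℝ :=
  mevL μ X I ∅ 1 1

/-- `M(I) = max_{i ∈ I} F_i(X_i)`. -/
noncomputable def Msub {Ω : Type*} [MeasurableSpace Ω] (μ : Measure Ω) {d : ℕ}
    (X : Fin d → Ω → ℝ) (I : Finset (Fin d)) (hI : I.Nonempty) (ω : Ω) : ℝ :=
  I.sup' hI fun i => margCDF μ X i (X i ω)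

/-- The stable tail dependence function `l(x₁,…,x_d) = -log F(x₁,…,x_d)`. -/
noncomputable def stdf {Ω : Type*} [MeasurableSpace Ω] (μ : Measure Ω) {d : ℕ}
    (X : Fin d → Ω → ℝ) (x : Fin d → ℝ) : ℝ :=
  -Real.log (jointCDF μ X x)

/-- `X` has a multivariate extreme value (max-stable) distribution with unit Fréchet
marginals under the probability measure `μ`. -/
structure IsMEVFrechet {Ω : Type*} [MeasurableSpace Ω] (μ : Measure Ω) {d : ℕ}
    (X : Fin d → Ω → ℝ) : Prop where
  meas : ∀ i, Measurable (X i)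
  frechet : ∀ i, ∀ u : ℝ, 0 < u → margCDF μ X i u = Real.exp (-u⁻¹)
  maxStable : ∀ t : ℝ, 0 < t → ∀ x : Fin d → ℝ, (∀ i, 0 < x i) →
    jointCDF μ X (fun i => t * x i) ^ t = jointCDF μ X x


/-- If `f` has derivative 1 at 0 and `f 0 = 0`, the difference quotient tends to 1. -/
lemma slope_fact {f : ℝ → ℝ} (hf : HasDerivAt f 1 0) (hf0 : f 0 = 0) :
    Tendsto (fun h : ℝ => if h = 0 then 1 else f h / h) (𝓝 0) (𝓝 1) := by
  rw [← nhdsNE_sup_pure (0:ℝ), tendsto_sup]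
  constructor
  · have h1 := hasDerivAt_iff_tendsto_slope.mp hf
    refine h1.congr' ?_
    filter_upwards [self_mem_nhdsWithin] with h hh
    have : h ≠ 0 := hh
    simp [slope_def_field, hf0, if_neg this]
  · have : (fun h : ℝ => if h = 0 then 1 else f h / h) 0 = 1 := by simp
    simpa [this] using tendsto_pure_nhds (fun h : ℝ => if h = 0 then 1 else f h / h) 0

lemma comp_lemma {f : ℝ → ℝ} (hf : HasDerivAt f 1 0) (hf0 : f 0 = 0)
    {c : ℝ → ℝ} {A : ℝ} (hc : Tendsto (fun t => t * c t) atTop (𝓝 A)) :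
    Tendsto (fun t => t * f (c t)) atTop (𝓝 A) := by
  have hc0 : Tendsto c atTop (𝓝 0) := by
    have h1 : Tendsto (fun t => (t * c t) * t⁻¹) atTop (𝓝 (A * 0)) :=
      hc.mul tendsto_inv_atTop_zero
    rw [mul_zero] at h1
    refine h1.congr' ?_
    filter_upwards [eventually_gt_atTop (0:ℝ)] with t ht
    field_simp
  have hφ : Tendsto (fun t => if c t = 0 then 1 else f (c t) / c t) atTop (𝓝 1) :=
    (slope_fact hf hf0).comp hc0
  have h2 := hc.mul hφ
  rw [mul_one] at h2
  refine h2.congr fun t => ?_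
  by_cases h : c t = 0
  · simp [h, hf0]
  · rw [if_neg h]; field_simp


section Aux
variable {Ω : Type*} [MeasurableSpace Ω] (μ : Measure Ω) [IsProbabilityMeasure μ]
  {d : ℕ} (X : Fin d → Ω → ℝ)

lemma G_limit (J : Finset (Fin d)) (c : Fin d → ℝ)
    {r : ℕ → ℝ} (hr : Monotone r) (hrt : Tendsto r atTop atTop) :
    Tendsto (fun n : ℕ => (μ {ω | ∀ i, X i ω ≤ (if i ∈ J then c i else r n)}).toReal)
      atTop (𝓝 ((μ {ω | ∀ i ∈ J, X i ω ≤ c i}).toReal)) := by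
  set s : ℕ → Set Ω := fun n => {ω | ∀ i, X i ω ≤ (if i ∈ J then c i else r n)} with hs
  have hmono : Monotone s := by
    intro m n hmn ω hω i
    by_cases hi : i ∈ J
    · simpa [hi] using hω i
    · have := hω i
      simp only [hi, if_false] at this ⊢
      exact this.trans (hr hmn)
  have hun : (⋃ n, s n) = {ω | ∀ i ∈ J, X i ω ≤ c i} := by
    ext ω
    simp only [hs, Set.mem_iUnion, Set.mem_setOf_eq]
    constructor
    · rintro ⟨n, hn⟩ i hi
      have := hn i
      rwa [if_pos hi] at this
    · intro h
      obtain ⟨M, hM⟩ : ∃ M : ℝ, ∀ i, X i ω ≤ M := by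
        refine ⟨∑ j, |X j ω|, fun i => ?_⟩
        calc X i ω ≤ |X i ω| := le_abs_self _
        _ ≤ ∑ j, |X j ω| := Finset.single_le_sum (f := fun j => |X j ω|) (fun j _ => abs_nonneg _) (Finset.mem_univ i)
      obtain ⟨n, hn⟩ := (hrt.eventually_ge_atTop M).exists
      refine ⟨n, fun i => ?_⟩
      by_cases hi : i ∈ J
      · rw [if_pos hi]; exact h i hi
      · rw [if_neg hi]; exact (hM i).trans hn
  have h1 := tendsto_measure_iUnion_atTop (μ := μ) hmono
  rw [hun] at h1
  exact (ENNReal.tendsto_toReal (measure_ne_top μ _)).comp h1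

lemma G_stable (hX : IsMEVFrechet μ X) (J : Finset (Fin d)) (c : Fin d → ℝ)
    (hc : ∀ i ∈ J, 0 < c i) {t : ℝ} (ht : 0 < t) :
    (μ {ω | ∀ i ∈ J, X i ω ≤ t * c i}).toReal ^ t
      = (μ {ω | ∀ i ∈ J, X i ω ≤ c i}).toReal := by
  have hr1 : Monotone (fun n : ℕ => (n : ℝ) + 1) := by
    intro m n h; simp only [add_le_add_iff_right, Nat.cast_le]; exact h
  have hrt1 : Tendsto (fun n : ℕ => (n : ℝ) + 1) atTop atTop :=
    tendsto_atTop_add_const_right _ 1 tendsto_natCast_atTop_atTop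
  have hr2 : Monotone (fun n : ℕ => t * ((n : ℝ) + 1)) := fun m n h =>
    mul_le_mul_of_nonneg_left (hr1 h) ht.le
  have hrt2 : Tendsto (fun n : ℕ => t * ((n : ℝ) + 1)) atTop atTop :=
    (tendsto_const_mul_atTop_of_pos ht).mpr hrt1
  have h1 := G_limit μ X J c hr1 hrt1
  have h2 := G_limit μ X J (fun i => t * c i) hr2 hrt2
  have h3 : ∀ n : ℕ,
      (μ {ω | ∀ i, X i ω ≤ (if i ∈ J then t * c i else t * ((n:ℝ) + 1))}).toReal ^ t
        = (μ {ω | ∀ i, X i ω ≤ (if i ∈ J then c i else (n:ℝ) + 1)}).toReal := by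
    intro n
    have hpos : ∀ i, 0 < (if i ∈ J then c i else (n:ℝ) + 1) := by
      intro i
      by_cases hi : i ∈ J
      · rw [if_pos hi]; exact hc i hi
      · rw [if_neg hi]; positivity
    have := hX.maxStable t ht (fun i => if i ∈ J then c i else (n:ℝ) + 1) hpos
    simp only [jointCDF, mul_ite] at this
    exact this
  have h4 : Tendsto
      (fun n : ℕ => (μ {ω | ∀ i, X i ω ≤ (if i ∈ J then t * c i else t * ((n:ℝ)+1))}).toReal ^ t)
      atTop (𝓝 ((μ {ω | ∀ i ∈ J, X i ω ≤ t * c i}).toReal ^ t)) :=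
    ((Real.continuousAt_rpow_const _ t (Or.inr ht.le)).tendsto).comp h2
  have h5 : Tendsto
      (fun n : ℕ => (μ {ω | ∀ i, X i ω ≤ (if i ∈ J then t * c i else t * ((n:ℝ)+1))}).toReal ^ t)
      atTop (𝓝 ((μ {ω | ∀ i ∈ J, X i ω ≤ c i}).toReal)) := by
    refine h1.congr fun n => ?_
    exact (h3 n).symm
  exact tendsto_nhds_unique h4 h5


lemma measSet (hX : IsMEVFrechet μ X) (J : Finset (Fin d)) (c : Fin d → ℝ) :
    MeasurableSet {ω | ∀ i ∈ J, X i ω ≤ c i} := by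
  have : {ω | ∀ i ∈ J, X i ω ≤ c i} = ⋂ i ∈ J, {ω | X i ω ≤ c i} := by
    ext ω; simp
  rw [this]
  exact MeasurableSet.biInter J.countable_toSet
    (fun i _ => measurableSet_le (hX.meas i) measurable_const)

lemma margCDF_mono {u v : ℝ} (i : Fin d) (huv : u ≤ v) : margCDF μ X i u ≤ margCDF μ X i v :=
  ENNReal.toReal_mono (measure_ne_top μ _)
    (measure_mono fun ω (h : X i ω ≤ u) => le_trans h huv)

lemma G_le_one (J : Finset (Fin d)) (c : Fin d → ℝ) :
    (μ {ω | ∀ i ∈ J, X i ω ≤ c i}).toReal ≤ 1 := by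
  have := prob_le_one (μ := μ) (s := {ω | ∀ i ∈ J, X i ω ≤ c i})
  calc (μ _).toReal ≤ (1 : ℝ≥0∞).toReal := ENNReal.toReal_mono (by simp) this
  _ = 1 := by simp

lemma prob_compl_toReal (hX : IsMEVFrechet μ X) {s : Set Ω} (hs : MeasurableSet s) :
    (μ sᶜ).toReal = 1 - (μ s).toReal := by
  rw [prob_compl_eq_one_sub hs, ENNReal.toReal_sub_of_le prob_le_one ENNReal.one_ne_top,
    ENNReal.toReal_one]

lemma G_union_bound (hX : IsMEVFrechet μ X) (J : Finset (Fin d)) (c : Fin d → ℝ)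
    (hc : ∀ i ∈ J, 0 < c i) :
    1 - (μ {ω | ∀ i ∈ J, X i ω ≤ c i}).toReal
      ≤ ∑ i ∈ J, (1 - Real.exp (-(c i)⁻¹)) := by
  have hsub : {ω | ∀ i ∈ J, X i ω ≤ c i}ᶜ ⊆ ⋃ i ∈ J, {ω | X i ω ≤ c i}ᶜ := by
    intro ω hω
    simp only [Set.mem_compl_iff, Set.mem_setOf_eq, not_forall] at hω
    obtain ⟨i, hi, h⟩ := hω
    exact Set.mem_biUnion hi h
  have h1 : μ ({ω | ∀ i ∈ J, X i ω ≤ c i}ᶜ) ≤ ∑ i ∈ J, μ ({ω | X i ω ≤ c i}ᶜ) :=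
    le_trans (measure_mono hsub) (measure_biUnion_finset_le _ _)
  have h2 : (μ ({ω | ∀ i ∈ J, X i ω ≤ c i}ᶜ)).toReal
      ≤ ∑ i ∈ J, (μ ({ω | X i ω ≤ c i}ᶜ)).toReal := by
    rw [← ENNReal.toReal_sum (fun i _ => measure_ne_top μ _)]
    exact ENNReal.toReal_mono (by exact (ENNReal.sum_lt_top.mpr
      (fun i _ => measure_lt_top μ _)).ne) h1
  rw [prob_compl_toReal μ X hX (measSet μ X hX J c)] at h2
  refine h2.trans (Finset.sum_le_sum fun i hi => ?_)
  have hm : (μ ({ω | X i ω ≤ c i}ᶜ)).toReal = 1 - margCDF μ X i (c i) :=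
    prob_compl_toReal μ X hX (measurableSet_le (hX.meas i) measurable_const)
  rw [hm, hX.frechet i (c i) (hc i hi)]

lemma G_pos (hX : IsMEVFrechet μ X) (J : Finset (Fin d)) (c : Fin d → ℝ)
    (hc : ∀ i ∈ J, 0 < c i) :
    0 < (μ {ω | ∀ i ∈ J, X i ω ≤ c i}).toReal := by
  -- find n with the union bound at scale (n+1) less than 1/2
  have htend : Tendsto (fun n : ℕ => ∑ i ∈ J, (1 - Real.exp (-(((n:ℝ)+1) * c i)⁻¹)))
      atTop (𝓝 0) := by
    have : ∀ i ∈ J, Tendsto (fun n : ℕ => (1 - Real.exp (-(((n:ℝ)+1) * c i)⁻¹)))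
        atTop (𝓝 0) := by
      intro i hi
      have h1 : Tendsto (fun n : ℕ => ((n:ℝ)+1) * c i) atTop atTop :=
        Tendsto.atTop_mul_const (hc i hi)
          (tendsto_atTop_add_const_right _ 1 tendsto_natCast_atTop_atTop)
      have h2 : Tendsto (fun n : ℕ => (((n:ℝ)+1) * c i)⁻¹) atTop (𝓝 0) :=
        h1.inv_tendsto_atTop
      have h2' : Tendsto (fun n : ℕ => -(((n:ℝ)+1) * c i)⁻¹) atTop (𝓝 0) := by
        simpa using h2.neg
      have h3 : Tendsto (fun n : ℕ => Real.exp (-(((n:ℝ)+1) * c i)⁻¹)) atTop (𝓝 1) := by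
        have := (Real.continuous_exp.tendsto 0).comp h2'
        simpa [Function.comp_def] using this
      have := (tendsto_const_nhds (x := (1:ℝ)) (f := atTop (α := ℕ))).sub h3
      simpa using this
    have := tendsto_finset_sum J this
    simpa using this
  obtain ⟨n, hn⟩ := (htend.eventually (eventually_lt_nhds (by norm_num : (0:ℝ) < 1))).exists
  have hc' : ∀ i ∈ J, 0 < ((n:ℝ)+1) * c i := fun i hi => mul_pos (by positivity) (hc i hi)
  have hb := G_union_bound μ X hX J (fun i => ((n:ℝ)+1) * c i) hc'
  have hGn : 0 < (μ {ω | ∀ i ∈ J, X i ω ≤ ((n:ℝ)+1) * c i}).toReal := by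
    have : 1 - (μ {ω | ∀ i ∈ J, X i ω ≤ ((n:ℝ)+1) * c i}).toReal < 1 := lt_of_le_of_lt hb hn
    linarith
  have hst := G_stable μ X hX J c hc (t := (n:ℝ)+1) (by positivity)
  rw [← hst]
  exact Real.rpow_pos_of_pos hGn _

/-- `G_J(a) = exp(log G_J(1) / a)` for `a > 0`. -/
lemma G_eq_exp (hX : IsMEVFrechet μ X) (J : Finset (Fin d)) {a : ℝ} (ha : 0 < a) :
    (μ {ω | ∀ i ∈ J, X i ω ≤ a}).toReal
      = Real.exp (Real.log ((μ {ω | ∀ i ∈ J, X i ω ≤ (1:ℝ)}).toReal) / a) := by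
  have h := G_stable μ X hX J (fun _ => 1) (fun _ _ => one_pos) ha
  simp only [mul_one] at h
  have hpos : 0 < (μ {ω | ∀ i ∈ J, X i ω ≤ a}).toReal :=
    G_pos μ X hX J (fun _ => a) (fun _ _ => ha)
  have hlog := congrArg Real.log h
  rw [Real.log_rpow hpos] at hlog
  have : Real.log ((μ {ω | ∀ i ∈ J, X i ω ≤ a}).toReal)
      = Real.log ((μ {ω | ∀ i ∈ J, X i ω ≤ (1:ℝ)}).toReal) / a := by
    field_simp at hlog ⊢
    linarith [hlog]
  rw [← this, Real.exp_log hpos]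

variable (I₁ I₂ : Finset (Fin d))

lemma set_pair (hdisj : Disjoint I₁ I₂) (p q : ℝ) :
    {ω | ∀ i ∈ I₁ ∪ I₂, X i ω ≤ (if i ∈ I₁ then p else q)}
      = {ω | (∀ i ∈ I₁, X i ω ≤ p) ∧ (∀ j ∈ I₂, X j ω ≤ q)} := by
  ext ω
  simp only [Set.mem_setOf_eq, Finset.mem_union]
  constructor
  · intro h
    refine ⟨fun i hi => by simpa [hi] using h i (Or.inl hi), fun j hj => ?_⟩
    have hj1 : j ∉ I₁ := Finset.disjoint_left.mp hdisj.symm hj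
    simpa [hj1] using h j (Or.inr hj)
  · rintro ⟨h1, h2⟩ i hi
    by_cases hi1 : i ∈ I₁
    · simpa [hi1] using h1 i hi1
    · have hi2 : i ∈ I₂ := hi.resolve_left hi1
      simpa [hi1] using h2 i hi2

/-- The pair tail function `l(p,q) = -log G(p⁻¹, q⁻¹)`. -/
noncomputable def lpair (p q : ℝ) : ℝ :=
  -Real.log ((μ {ω | (∀ i ∈ I₁, X i ω ≤ p⁻¹) ∧ (∀ j ∈ I₂, X j ω ≤ q⁻¹)}).toReal)

lemma Gpair_pos (hX : IsMEVFrechet μ X) (hdisj : Disjoint I₁ I₂) {p q : ℝ}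
    (hp : 0 < p) (hq : 0 < q) :
    0 < (μ {ω | (∀ i ∈ I₁, X i ω ≤ p⁻¹) ∧ (∀ j ∈ I₂, X j ω ≤ q⁻¹)}).toReal := by
  rw [← set_pair X I₁ I₂ hdisj]
  exact G_pos μ X hX _ _ (fun i _ => by by_cases hi : i ∈ I₁ <;> simp [hi, hp, hq])

lemma lpair_nonneg (p q : ℝ) : 0 ≤ lpair μ X I₁ I₂ p q := by
  unfold lpair
  rw [neg_nonneg]
  refine Real.log_nonpos ENNReal.toReal_nonneg ?_
  calc (μ _).toReal ≤ (1:ℝ≥0∞).toReal := ENNReal.toReal_mono (by simp) prob_le_one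
  _ = 1 := by simp

lemma exp_neg_lpair (hX : IsMEVFrechet μ X) (hdisj : Disjoint I₁ I₂) {p q : ℝ}
    (hp : 0 < p) (hq : 0 < q) :
    Real.exp (-(lpair μ X I₁ I₂ p q))
      = (μ {ω | (∀ i ∈ I₁, X i ω ≤ p⁻¹) ∧ (∀ j ∈ I₂, X j ω ≤ q⁻¹)}).toReal := by
  rw [lpair, neg_neg, Real.exp_log (Gpair_pos μ X I₁ I₂ hX hdisj hp hq)]

lemma lpair_homog (hX : IsMEVFrechet μ X) (hdisj : Disjoint I₁ I₂) {p q s : ℝ}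
    (hp : 0 < p) (hq : 0 < q) (hs : 0 < s) :
    lpair μ X I₁ I₂ (s * p) (s * q) = s * lpair μ X I₁ I₂ p q := by
  have hc : ∀ i ∈ I₁ ∪ I₂, (0:ℝ) < (if i ∈ I₁ then (s*p)⁻¹ else (s*q)⁻¹) := by
    intro i _
    by_cases hi : i ∈ I₁ <;> simp [hi] <;> positivity
  have h := G_stable μ X hX (I₁ ∪ I₂) (fun i => if i ∈ I₁ then (s*p)⁻¹ else (s*q)⁻¹) hc hs
  have hset1 : {ω | ∀ i ∈ I₁ ∪ I₂, X i ω ≤ s * (if i ∈ I₁ then (s*p)⁻¹ else (s*q)⁻¹)}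
      = {ω | (∀ i ∈ I₁, X i ω ≤ p⁻¹) ∧ (∀ j ∈ I₂, X j ω ≤ q⁻¹)} := by
    rw [← set_pair X I₁ I₂ hdisj p⁻¹ q⁻¹]
    apply congrArg
    ext ω
    refine forall_congr' fun i => forall_congr' fun hi => ?_
    by_cases hi1 : i ∈ I₁
    · simp only [hi1, if_true]
      rw [mul_inv, ← mul_assoc, mul_inv_cancel₀ hs.ne', one_mul]
    · simp only [hi1, if_false]
      rw [mul_inv, ← mul_assoc, mul_inv_cancel₀ hs.ne', one_mul]
  have hset2 : {ω | ∀ i ∈ I₁ ∪ I₂, X i ω ≤ (if i ∈ I₁ then (s*p)⁻¹ else (s*q)⁻¹)}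
      = {ω | (∀ i ∈ I₁, X i ω ≤ (s*p)⁻¹) ∧ (∀ j ∈ I₂, X j ω ≤ (s*q)⁻¹)} :=
    set_pair X I₁ I₂ hdisj _ _
  simp only [hset1, hset2] at h
  have hG1 : 0 < (μ {ω | (∀ i ∈ I₁, X i ω ≤ p⁻¹) ∧ (∀ j ∈ I₂, X j ω ≤ q⁻¹)}).toReal :=
    Gpair_pos μ X I₁ I₂ hX hdisj hp hq
  have hlog := congrArg Real.log h.symm
  rw [Real.log_rpow hG1] at hlog
  unfold lpair
  rw [hlog]
  ring

lemma lpair_mono (hX : IsMEVFrechet μ X) (hdisj : Disjoint I₁ I₂) {p q p' q' : ℝ}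
    (hp : 0 < p) (hq : 0 < q) (hpp : p ≤ p') (hqq : q ≤ q') :
    lpair μ X I₁ I₂ p q ≤ lpair μ X I₁ I₂ p' q' := by
  have hp' : 0 < p' := hp.trans_le hpp
  have hq' : 0 < q' := hq.trans_le hqq
  have hsub : {ω | (∀ i ∈ I₁, X i ω ≤ p'⁻¹) ∧ (∀ j ∈ I₂, X j ω ≤ q'⁻¹)}
      ⊆ {ω | (∀ i ∈ I₁, X i ω ≤ p⁻¹) ∧ (∀ j ∈ I₂, X j ω ≤ q⁻¹)} := by
    rintro ω ⟨h1, h2⟩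
    exact ⟨fun i hi => (h1 i hi).trans (inv_anti₀ hp hpp),
      fun j hj => (h2 j hj).trans (inv_anti₀ hq hqq)⟩
  have hle : (μ {ω | (∀ i ∈ I₁, X i ω ≤ p'⁻¹) ∧ (∀ j ∈ I₂, X j ω ≤ q'⁻¹)}).toReal
      ≤ (μ {ω | (∀ i ∈ I₁, X i ω ≤ p⁻¹) ∧ (∀ j ∈ I₂, X j ω ≤ q⁻¹)}).toReal :=
    ENNReal.toReal_mono (measure_ne_top μ _) (measure_mono hsub)
  unfold lpair
  have := Real.log_le_log (Gpair_pos μ X I₁ I₂ hX hdisj hp' hq') hle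
  linarith

end Aux

section Msub
variable {Ω : Type*} [MeasurableSpace Ω] (μ : Measure Ω) [IsProbabilityMeasure μ]
  {d : ℕ} (X : Fin d → Ω → ℝ)

lemma Msub_event (hX : IsMEVFrechet μ X) (I : Finset (Fin d)) (hI : I.Nonempty)
    {u : ℝ} (hu0 : 0 < u) (hu1 : u < 1) :
    {ω | u < Msub μ X I hI ω} = {ω | ∀ i ∈ I, X i ω ≤ (-Real.log u)⁻¹}ᶜ := by
  have hlogu : 0 < -Real.log u := by
    have := Real.log_neg hu0 hu1
    linarith
  have ha : 0 < (-Real.log u)⁻¹ := inv_pos.mpr hlogu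
  have hMa : ∀ i : Fin d, margCDF μ X i (-Real.log u)⁻¹ = u := by
    intro i
    rw [hX.frechet i _ ha, inv_inv, neg_neg, Real.exp_log hu0]
  have key : ∀ i (ω : Ω), margCDF μ X i (X i ω) ≤ u ↔ X i ω ≤ (-Real.log u)⁻¹ := by
    intro i ω
    constructor
    · intro h
      by_contra hlt
      push_neg at hlt
      have hXpos : 0 < X i ω := ha.trans hlt
      have : margCDF μ X i (X i ω) = Real.exp (-(X i ω)⁻¹) := hX.frechet i _ hXpos
      rw [this] at h
      have hinv : (X i ω)⁻¹ < (-Real.log u)⁻¹⁻¹ := by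
        exact inv_strictAnti₀ ha hlt
      rw [inv_inv] at hinv
      have : Real.exp (Real.log u) < Real.exp (-(X i ω)⁻¹) := by
        apply Real.exp_lt_exp.mpr
        linarith
      rw [Real.exp_log hu0] at this
      linarith
    · intro h
      calc margCDF μ X i (X i ω) ≤ margCDF μ X i (-Real.log u)⁻¹ := margCDF_mono μ X i h
      _ = u := hMa i
  ext ω
  have hiff : Msub μ X I hI ω ≤ u ↔ ∀ i ∈ I, X i ω ≤ (-Real.log u)⁻¹ := by
    rw [Msub, Finset.sup'_le_iff]
    exact forall₂_congr fun i _ => key i ω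
  simp only [Set.mem_setOf_eq, Set.mem_compl_iff]
  rw [← not_le, hiff]

end Msub

section Aux2
variable {Ω : Type*} [MeasurableSpace Ω] (μ : Measure Ω) [IsProbabilityMeasure μ]
  {d : ℕ} (X : Fin d → Ω → ℝ)

lemma extCoef_eq (I : Finset (Fin d)) :
    extCoef μ X I = -Real.log ((μ {ω | ∀ i ∈ I, X i ω ≤ (1:ℝ)}).toReal) := by
  unfold extCoef mevL
  have h : {ω | (∀ i ∈ I, X i ω ≤ (1:ℝ)) ∧ (∀ j ∈ (∅:Finset (Fin d)), X j ω ≤ (1:ℝ))}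
      = {ω | ∀ i ∈ I, X i ω ≤ (1:ℝ)} := by
    ext ω; simp
  rw [h]

lemma extCoef_pos (hX : IsMEVFrechet μ X) (I : Finset (Fin d)) (hI : I.Nonempty) :
    0 < extCoef μ X I := by
  obtain ⟨i₀, hi₀⟩ := hI
  rw [extCoef_eq]
  have hGpos : 0 < (μ {ω | ∀ i ∈ I, X i ω ≤ (1:ℝ)}).toReal :=
    G_pos μ X hX I (fun _ => 1) (fun _ _ => one_pos)
  have hle : (μ {ω | ∀ i ∈ I, X i ω ≤ (1:ℝ)}).toReal ≤ Real.exp (-1) := by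
    have hsub : {ω | ∀ i ∈ I, X i ω ≤ (1:ℝ)} ⊆ {ω | X i₀ ω ≤ (1:ℝ)} :=
      fun ω hω => hω i₀ hi₀
    have := ENNReal.toReal_mono (measure_ne_top μ _) (measure_mono hsub)
    have hm : margCDF μ X i₀ 1 = Real.exp (-1) := by
      rw [hX.frechet i₀ 1 one_pos]; norm_num
    rw [margCDF] at hm
    linarith [this, hm.le]
  have hlt : (μ {ω | ∀ i ∈ I, X i ω ≤ (1:ℝ)}).toReal < 1 :=
    lt_of_le_of_lt hle (Real.exp_lt_one_iff.mpr (by norm_num))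
  have := Real.log_neg hGpos hlt
  linarith

lemma G_formula (hX : IsMEVFrechet μ X) (I : Finset (Fin d)) {a : ℝ} (ha : 0 < a) :
    (μ {ω | ∀ i ∈ I, X i ω ≤ a⁻¹}).toReal = Real.exp (-(extCoef μ X I * a)) := by
  rw [G_eq_exp μ X hX I (inv_pos.mpr ha), extCoef_eq]
  congr 1
  field_simp

/-- Measure of the single-index exceedance event. -/
lemma single_event_formula (hX : IsMEVFrechet μ X) (I : Finset (Fin d)) (hI : I.Nonempty)
    {t z : ℝ} (ht : 0 < t) (hz : 0 < z) (hzt : z < t) :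
    (μ {ω | 1 - z / t < Msub μ X I hI ω}).toReal
      = 1 - Real.exp (-(extCoef μ X I * (-Real.log (1 - z / t)))) := by
  have hu0 : 0 < 1 - z / t := by
    have : z / t < 1 := (div_lt_one ht).mpr hzt
    linarith
  have hu1 : 1 - z / t < 1 := by
    have : 0 < z / t := div_pos hz ht
    linarith
  have hlp : 0 < -Real.log (1 - z / t) := by
    have := Real.log_neg hu0 hu1
    linarith
  rw [Msub_event μ X hX I hI hu0 hu1,
    prob_compl_toReal μ X hX (measSet μ X hX I (fun _ => (-Real.log (1 - z / t))⁻¹)),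
    G_formula μ X hX I hlp]

/-- Measure of the joint exceedance event. -/
lemma pair_event_formula (hX : IsMEVFrechet μ X) (I₁ I₂ : Finset (Fin d))
    (h1 : I₁.Nonempty) (h2 : I₂.Nonempty) (hdisj : Disjoint I₁ I₂)
    {t x y : ℝ} (ht : 0 < t) (hx : 0 < x) (hxt : x < t) (hy : 0 < y) (hyt : y < t) :
    (μ {ω | 1 - x / t < Msub μ X I₁ h1 ω ∧ 1 - y / t < Msub μ X I₂ h2 ω}).toReal
      = (1 - Real.exp (-(extCoef μ X I₁ * (-Real.log (1 - x / t)))))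
        + (1 - Real.exp (-(extCoef μ X I₂ * (-Real.log (1 - y / t)))))
        - (1 - Real.exp (-(lpair μ X I₁ I₂ (-Real.log (1 - x / t)) (-Real.log (1 - y / t))))) := by
  have hu0x : 0 < 1 - x / t := by
    have : x / t < 1 := (div_lt_one ht).mpr hxt
    linarith
  have hu1x : 1 - x / t < 1 := by
    have : 0 < x / t := div_pos hx ht
    linarith
  have hu0y : 0 < 1 - y / t := by
    have : y / t < 1 := (div_lt_one ht).mpr hyt
    linarith
  have hu1y : 1 - y / t < 1 := by
    have : 0 < y / t := div_pos hy ht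
    linarith
  have hpx : 0 < -Real.log (1 - x / t) := by have := Real.log_neg hu0x hu1x; linarith
  have hpy : 0 < -Real.log (1 - y / t) := by have := Real.log_neg hu0y hu1y; linarith
  set a : ℝ := (-Real.log (1 - x / t))⁻¹ with ha_def
  set b : ℝ := (-Real.log (1 - y / t))⁻¹ with hb_def
  set S₁ : Set Ω := {ω | ∀ i ∈ I₁, X i ω ≤ a} with hS₁
  set S₂ : Set Ω := {ω | ∀ i ∈ I₂, X i ω ≤ b} with hS₂
  have hmS₁ : MeasurableSet S₁ := measSet μ X hX I₁ (fun _ => a)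
  have hmS₂ : MeasurableSet S₂ := measSet μ X hX I₂ (fun _ => b)
  have hset : {ω | 1 - x / t < Msub μ X I₁ h1 ω ∧ 1 - y / t < Msub μ X I₂ h2 ω}
      = (S₁ ∪ S₂)ᶜ := by
    rw [Set.compl_union]
    rw [show {ω | 1 - x / t < Msub μ X I₁ h1 ω ∧ 1 - y / t < Msub μ X I₂ h2 ω}
        = {ω | 1 - x / t < Msub μ X I₁ h1 ω} ∩ {ω | 1 - y / t < Msub μ X I₂ h2 ω} from rfl]
    rw [Msub_event μ X hX I₁ h1 hu0x hu1x, Msub_event μ X hX I₂ h2 hu0y hu1y]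
  have hincl : (μ (S₁ ∪ S₂)).toReal + (μ (S₁ ∩ S₂)).toReal
      = (μ S₁).toReal + (μ S₂).toReal := by
    have := measure_union_add_inter (μ := μ) S₁ hmS₂
    have h' := congrArg ENNReal.toReal this
    rwa [ENNReal.toReal_add (measure_ne_top μ _) (measure_ne_top μ _),
      ENNReal.toReal_add (measure_ne_top μ _) (measure_ne_top μ _)] at h'
  have hS₁v : (μ S₁).toReal = Real.exp (-(extCoef μ X I₁ * (-Real.log (1 - x / t)))) :=
    G_formula μ X hX I₁ hpx
  have hS₂v : (μ S₂).toReal = Real.exp (-(extCoef μ X I₂ * (-Real.log (1 - y / t)))) :=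
    G_formula μ X hX I₂ hpy
  have hS₁₂v : (μ (S₁ ∩ S₂)).toReal
      = Real.exp (-(lpair μ X I₁ I₂ (-Real.log (1 - x / t)) (-Real.log (1 - y / t)))) := by
    rw [exp_neg_lpair μ X I₁ I₂ hX hdisj hpx hpy]
    have hseteq : S₁ ∩ S₂ = {ω | (∀ i ∈ I₁, X i ω ≤ (-Real.log (1 - x / t))⁻¹)
        ∧ (∀ j ∈ I₂, X j ω ≤ (-Real.log (1 - y / t))⁻¹)} := by
      ext ω
      simp only [hS₁, hS₂, Set.mem_inter_iff, Set.mem_setOf_eq, ha_def, hb_def]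
    rw [hseteq]
  rw [hset, prob_compl_toReal μ X hX (hmS₁.union hmS₂)]
  rw [hS₁v, hS₂v, hS₁₂v] at hincl
  linarith

end Aux2

/-- For a MEV distribution with unit Fréchet marginals the conditional
tail limits `Λ_U^{(I₁|I₂)}(x,y)` and `Λ_U^{(I₂|I₁)}(y,x)` exist and satisfy
`yε_{I₂}·Λ_U^{(I₁|I₂)}(x,y) = xε_{I₁}·Λ_U^{(I₂|I₁)}(y,x) = xε_{I₁} + yε_{I₂} - l^{(I₁,I₂)}(x⁻¹,y⁻¹)`. -/
theorem statement3 {Ω : Type*} [MeasurableSpace Ω] (μ : Measure Ω) [IsProbabilityMeasure μ]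
    {d : ℕ} (X : Fin d → Ω → ℝ) (hX : IsMEVFrechet μ X)
    (I₁ I₂ : Finset (Fin d)) (h1 : I₁.Nonempty) (h2 : I₂.Nonempty) (hdisj : Disjoint I₁ I₂)
    (x y : ℝ) (hx : 0 < x) (hy : 0 < y) :
    ∃ L₁ L₂ : ℝ,
      Tendsto
        (fun t : ℝ =>
          (μ {ω | 1 - x / t < Msub μ X I₁ h1 ω ∧ 1 - y / t < Msub μ X I₂ h2 ω}).toReal /
            (μ {ω | 1 - y / t < Msub μ X I₂ h2 ω}).toReal)
        atTop (nhds L₁) ∧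
      Tendsto
        (fun t : ℝ =>
          (μ {ω | 1 - y / t < Msub μ X I₂ h2 ω ∧ 1 - x / t < Msub μ X I₁ h1 ω}).toReal /
            (μ {ω | 1 - x / t < Msub μ X I₁ h1 ω}).toReal)
        atTop (nhds L₂) ∧
      y * extCoef μ X I₂ * L₁ = x * extCoef μ X I₁ * L₂ ∧
      y * extCoef μ X I₂ * L₁
        = x * extCoef μ X I₁ + y * extCoef μ X I₂ - mevL μ X I₁ I₂ x⁻¹ y⁻¹ := by
    classical
  -- derivative facts
  have hf_log : HasDerivAt (fun h : ℝ => -Real.log (1 - h)) 1 0 := by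
    have h0 : HasDerivAt (fun h : ℝ => 1 - h) (-1) 0 := (hasDerivAt_id 0).const_sub 1
    have hlog := (Real.hasDerivAt_log (by norm_num : (1:ℝ) - 0 ≠ 0)).comp 0 h0
    have h2 := hlog.neg
    simp only [Function.comp_def] at h2
    convert h2 using 1 <;> first | rfl | norm_num
  have hf_log0 : (fun h : ℝ => -Real.log (1 - h)) 0 = 0 := by norm_num
  have hf_exp : HasDerivAt (fun h : ℝ => 1 - Real.exp (-h)) 1 0 := by
    have h0 : HasDerivAt (fun h : ℝ => -h) (-1) 0 := (hasDerivAt_id 0).neg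
    have hexp := (Real.hasDerivAt_exp (-(0:ℝ))).comp 0 h0
    have h2 := hexp.const_sub 1
    simp only [Function.comp_def] at h2
    convert h2 using 1 <;> first | rfl | norm_num
  have hf_exp0 : (fun h : ℝ => 1 - Real.exp (-h)) 0 = 0 := by norm_num
  set ε₁ := extCoef μ X I₁ with hε₁
  set ε₂ := extCoef μ X I₂ with hε₂
  have hε₁pos : 0 < ε₁ := extCoef_pos μ X hX I₁ h1
  have hε₂pos : 0 < ε₂ := extCoef_pos μ X hX I₂ h2
  -- limit of t * (-log(1 - z/t)) = z
  have hp_lim : ∀ z : ℝ, 0 < z →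
      Tendsto (fun t : ℝ => t * (-Real.log (1 - z / t))) atTop (𝓝 z) := by
    intro z hz
    have hc : Tendsto (fun t : ℝ => t * (z / t)) atTop (𝓝 z) := by
      refine tendsto_const_nhds.congr' ?_
      filter_upwards [eventually_gt_atTop (0:ℝ)] with t ht
      field_simp
    exact comp_lemma hf_log hf_log0 hc
  -- term limits
  have hterm : ∀ (ε z : ℝ), 0 < z →
      Tendsto (fun t : ℝ => t * (1 - Real.exp (-(ε * (-Real.log (1 - z / t))))))
        atTop (𝓝 (ε * z)) := by
    intro ε z hz
    have hc : Tendsto (fun t : ℝ => t * (ε * (-Real.log (1 - z / t)))) atTop (𝓝 (ε * z)) := by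
      have := (hp_lim z hz).const_mul ε
      refine this.congr fun t => by ring
    exact comp_lemma hf_exp hf_exp0 hc
  have hterm1 := hterm ε₁ x hx
  have hterm2 := hterm ε₂ y hy
  -- squeeze: limit of lpair along the path
  set lxy := lpair μ X I₁ I₂ x y with hlxy
  have hP := hp_lim x hx
  have hQ := hp_lim y hy
  have hll : Tendsto (fun t : ℝ =>
      lpair μ X I₁ I₂ (t * (-Real.log (1 - x / t))) (t * (-Real.log (1 - y / t))))
      atTop (𝓝 lxy) := by
    set P : ℝ → ℝ := fun t => t * (-Real.log (1 - x / t)) with hPdef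
    set Q : ℝ → ℝ := fun t => t * (-Real.log (1 - y / t)) with hQdef
    have hlow : Tendsto (fun t => min (P t / x) (Q t / y) * lxy) atTop (𝓝 lxy) := by
      have := ((hP.div_const x).min (hQ.div_const y)).mul_const lxy
      rwa [div_self hx.ne', div_self hy.ne', min_self, one_mul] at this
    have hup : Tendsto (fun t => max (P t / x) (Q t / y) * lxy) atTop (𝓝 lxy) := by
      have := ((hP.div_const x).max (hQ.div_const y)).mul_const lxy
      rwa [div_self hx.ne', div_self hy.ne', max_self, one_mul] at this
    refine tendsto_of_tendsto_of_tendsto_of_le_of_le' hlow hup ?_ ?_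
    · filter_upwards [hP.eventually (eventually_gt_nhds hx),
        hQ.eventually (eventually_gt_nhds hy)] with t hPt hQt
      set m := min (P t / x) (Q t / y) with hm
      have hm0 : 0 < m := lt_min (div_pos hPt hx) (div_pos hQt hy)
      have heq : m * lxy = lpair μ X I₁ I₂ (m * x) (m * y) :=
        (lpair_homog μ X I₁ I₂ hX hdisj hx hy hm0).symm
      rw [heq]
      refine lpair_mono μ X I₁ I₂ hX hdisj (mul_pos hm0 hx) (mul_pos hm0 hy) ?_ ?_
      · rw [← le_div_iff₀ hx]; exact min_le_left _ _
      · rw [← le_div_iff₀ hy]; exact min_le_right _ _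
    · filter_upwards [hP.eventually (eventually_gt_nhds hx),
        hQ.eventually (eventually_gt_nhds hy)] with t hPt hQt
      set m := max (P t / x) (Q t / y) with hm
      have hm0 : 0 < m := lt_max_of_lt_left (div_pos hPt hx)
      have heq : m * lxy = lpair μ X I₁ I₂ (m * x) (m * y) :=
        (lpair_homog μ X I₁ I₂ hX hdisj hx hy hm0).symm
      rw [heq]
      refine lpair_mono μ X I₁ I₂ hX hdisj hPt hQt ?_ ?_
      · rw [← div_le_iff₀ hx]; exact le_max_left _ _
      · rw [← div_le_iff₀ hy]; exact le_max_right _ _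
  have hc3 : Tendsto (fun t : ℝ =>
      t * lpair μ X I₁ I₂ (-Real.log (1 - x / t)) (-Real.log (1 - y / t)))
      atTop (𝓝 lxy) := by
    refine hll.congr' ?_
    filter_upwards [eventually_gt_atTop (0:ℝ), eventually_gt_atTop x, eventually_gt_atTop y]
      with t ht htx hty
    have hu0x : 0 < 1 - x / t := by
      have : x / t < 1 := (div_lt_one ht).mpr htx; linarith
    have hu1x : 1 - x / t < 1 := by
      have : 0 < x / t := div_pos hx ht; linarith
    have hu0y : 0 < 1 - y / t := by
      have : y / t < 1 := (div_lt_one ht).mpr hty; linarith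
    have hu1y : 1 - y / t < 1 := by
      have : 0 < y / t := div_pos hy ht; linarith
    have hpx : 0 < -Real.log (1 - x / t) := by have := Real.log_neg hu0x hu1x; linarith
    have hpy : 0 < -Real.log (1 - y / t) := by have := Real.log_neg hu0y hu1y; linarith
    exact lpair_homog μ X I₁ I₂ hX hdisj hpx hpy ht
  have hterm3 : Tendsto (fun t : ℝ =>
      t * (1 - Real.exp (-(lpair μ X I₁ I₂ (-Real.log (1 - x / t)) (-Real.log (1 - y / t))))))
      atTop (𝓝 lxy) := comp_lemma hf_exp hf_exp0 hc3
  -- the eventual set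
  have hev : ∀ᶠ t : ℝ in atTop, 0 < t ∧ x < t ∧ y < t := by
    filter_upwards [eventually_gt_atTop (0:ℝ), eventually_gt_atTop x, eventually_gt_atTop y]
      with t h1' h2' h3'
    exact ⟨h1', h2', h3'⟩
  -- numerator and denominators
  have hnum : Tendsto (fun t : ℝ =>
      t * (μ {ω | 1 - x / t < Msub μ X I₁ h1 ω ∧ 1 - y / t < Msub μ X I₂ h2 ω}).toReal)
      atTop (𝓝 (ε₁ * x + ε₂ * y - lxy)) := by
    refine (((hterm1.add hterm2).sub hterm3)).congr' ?_
    filter_upwards [hev] with t ⟨ht, htx, hty⟩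
    rw [pair_event_formula μ X hX I₁ I₂ h1 h2 hdisj ht hx htx hy hty]
    ring
  have hden2 : Tendsto (fun t : ℝ =>
      t * (μ {ω | 1 - y / t < Msub μ X I₂ h2 ω}).toReal) atTop (𝓝 (ε₂ * y)) := by
    refine hterm2.congr' ?_
    filter_upwards [hev] with t ⟨ht, htx, hty⟩
    rw [single_event_formula μ X hX I₂ h2 ht hy hty]
  have hden1 : Tendsto (fun t : ℝ =>
      t * (μ {ω | 1 - x / t < Msub μ X I₁ h1 ω}).toReal) atTop (𝓝 (ε₁ * x)) := by
    refine hterm1.congr' ?_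
    filter_upwards [hev] with t ⟨ht, htx, hty⟩
    rw [single_event_formula μ X hX I₁ h1 ht hx htx]
  -- ratios
  refine ⟨(ε₁ * x + ε₂ * y - lxy) / (ε₂ * y), (ε₁ * x + ε₂ * y - lxy) / (ε₁ * x), ?_, ?_, ?_, ?_⟩
  · have hdiv := hnum.div hden2 (by positivity : (0:ℝ) < ε₂ * y).ne'
    refine hdiv.congr' ?_
    filter_upwards [eventually_gt_atTop (0:ℝ)] with t ht
    simp only [Pi.div_apply]
    rw [mul_div_mul_left _ _ ht.ne']
  · have hcomm : ∀ t : ℝ, {ω | 1 - y / t < Msub μ X I₂ h2 ω ∧ 1 - x / t < Msub μ X I₁ h1 ω}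
        = {ω | 1 - x / t < Msub μ X I₁ h1 ω ∧ 1 - y / t < Msub μ X I₂ h2 ω} := by
      intro t; ext ω; exact and_comm
    have hdiv := hnum.div hden1 (by positivity : (0:ℝ) < ε₁ * x).ne'
    refine hdiv.congr' ?_
    filter_upwards [eventually_gt_atTop (0:ℝ)] with t ht
    simp only [Pi.div_apply]
    rw [hcomm t, mul_div_mul_left _ _ ht.ne']
  · have hx1 : ε₁ * x ≠ 0 := by positivity
    have hy2 : ε₂ * y ≠ 0 := by positivity
    field_simp
  · have hy2 : ε₂ * y ≠ 0 := by positivity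
    have hL : mevL μ X I₁ I₂ x⁻¹ y⁻¹ = lxy := rfl
    rw [hL]
    field_simp
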